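/- arXiv:2604.23548 — 3 statements merged into one kernel-verified Lean document; each statement's English description precedes it below -/
import Mathlib

section
/- Let A, B, B' be bounded linear operators with ‖A‖ ≤ ρ < 1 and ‖B' − B‖ ≤ δ. Then ‖B' − (I − A)⁻¹ B‖ ≤ ρ‖B‖/(1 − ρ) + δ. In particular, if B' = J_x T(z_k, x), B = J_x T(z⋆, x), z ↦ J_x T(z, x) is L_J-Lipschitz in operator norm, and ‖B‖ ≤ L_T, then the one-step Jacobian error satisfies ‖J_x T(z_k, x) − (I − A)⁻¹ B‖ ≤ ρ L_T/(1 − ρ) + L_J ‖z_k − z⋆‖. -/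
theorem stmt_5 {E F : Type*} [NormedAddCommGroup E] [NormedSpace ℝ E]
    [NormedAddCommGroup F] [NormedSpace ℝ F]
    (A : F →L[ℝ] F) (B B' : E →L[ℝ] F) (ρ δ : ℝ)
    (hA : ‖A‖ ≤ ρ) (hρ : ρ < 1) (hBB : ‖B' - B‖ ≤ δ)
    (J : E →L[ℝ] F) (hJ : (1 - A).comp J = B) :
    ‖B' - J‖ ≤ ρ * ‖B‖ / (1 - ρ) + δ := by
  have hρ0 : 0 ≤ ρ := le_trans (norm_nonneg A) hA
  have h1ρ : 0 < 1 - ρ := by linarith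
  have hJB : J - A.comp J = B := by
    rw [← hJ]; ext x; simp [ContinuousLinearMap.sub_comp]
  have hAJ : ‖A.comp J‖ ≤ ρ * ‖J‖ :=
    le_trans (ContinuousLinearMap.opNorm_comp_le A J)
      (mul_le_mul_of_nonneg_right hA (norm_nonneg J))
  have hJnorm : ‖J‖ ≤ ‖B‖ / (1 - ρ) := by
    rw [le_div_iff₀ h1ρ]
    have : ‖J‖ ≤ ‖B‖ + ρ * ‖J‖ := by
      calc ‖J‖ = ‖(J - A.comp J) + A.comp J‖ := by rw [sub_add_cancel]
        _ ≤ ‖J - A.comp J‖ + ‖A.comp J‖ := norm_add_le _ _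
        _ = ‖B‖ + ‖A.comp J‖ := by rw [hJB]
        _ ≤ ‖B‖ + ρ * ‖J‖ := by linarith
    nlinarith
  calc ‖B' - J‖ = ‖(B' - B) - A.comp J‖ := by rw [← hJB]; congr 1; abel
    _ ≤ ‖B' - B‖ + ‖A.comp J‖ := norm_sub_le _ _
    _ ≤ δ + ρ * ‖J‖ := by linarith
    _ ≤ ρ * ‖B‖ / (1 - ρ) + δ := by
        have : ρ * ‖J‖ ≤ ρ * (‖B‖ / (1 - ρ)) := mul_le_mul_of_nonneg_left hJnorm hρ0
        rw [mul_div_assoc]; linarith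
end

section
/- Assume: (i) a ρ-contractive fixed-point iteration z_{k+1} = T(z_k) with fixed point z⋆ and d₀ = ‖z₀ − z⋆‖; (ii) maps a(z), b(z) that are L_x- and L_z-Lipschitz in z respectively, with ‖b(z)‖ ≤ C_z for all z; (iii) Jacobians J(z) with ‖J(z) − J⋆‖ ≤ ρL_T/(1−ρ) + L_J‖z_{prev} − z⋆‖ where z = T(z_{prev}), and ‖J⋆‖ ≤ σ_J. Then for v(z) = a(z) + b(z)∘J(z) and v⋆ = a(z⋆) + b(z⋆)∘J⋆, one has ‖v(z_{k+1}) − v⋆‖ ≤ ρL_T C_z/(1−ρ) + ρ^k d₀ (ρ(L_x + L_z σ_J) + C_z L_J). -/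
theorem stmt_10 {E X : Type*} [NormedAddCommGroup E] [NormedSpace ℝ E]
    [NormedAddCommGroup X] [NormedSpace ℝ X]
    (T : E → E) (ρ : ℝ) (hρ0 : 0 ≤ ρ) (hρ1 : ρ < 1)
    (hlip : ∀ x y, ‖T x - T y‖ ≤ ρ * ‖x - y‖)
    (zstar : E) (hfix : T zstar = zstar)
    (z : ℕ → E) (hrec : ∀ k, z (k + 1) = T (z k))
    (d0 : ℝ) (hd0 : d0 = ‖z 0 - zstar‖)
    (a : E → X →L[ℝ] ℝ) (b : E → E →L[ℝ] ℝ) (J : E → X →L[ℝ] E) (Jstar : X →L[ℝ] E)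
    (L_x L_z C_z L_T L_J σ_J : ℝ)
    (hLx0 : 0 ≤ L_x) (hLz0 : 0 ≤ L_z) (hCz0 : 0 ≤ C_z) (hLT0 : 0 ≤ L_T)
    (hLJ0 : 0 ≤ L_J) (hσJ0 : 0 ≤ σ_J)
    (ha : ∀ w w', ‖a w - a w'‖ ≤ L_x * ‖w - w'‖)
    (hb : ∀ w w', ‖b w - b w'‖ ≤ L_z * ‖w - w'‖)
    (hbbd : ∀ w, ‖b w‖ ≤ C_z)
    (hJ : ∀ w, ‖J (T w) - Jstar‖ ≤ ρ * L_T / (1 - ρ) + L_J * ‖w - zstar‖)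
    (hJstar : ‖Jstar‖ ≤ σ_J) :
    ∀ k, ‖(a (z (k + 1)) + (b (z (k + 1))).comp (J (z (k + 1)))) -
        (a zstar + (b zstar).comp Jstar)‖ ≤
      ρ * L_T * C_z / (1 - ρ) + ρ ^ k * d0 * (ρ * (L_x + L_z * σ_J) + C_z * L_J) := by
  have hd0pos : 0 ≤ d0 := hd0 ▸ norm_nonneg _
  have hgeo : ∀ k, ‖z k - zstar‖ ≤ ρ ^ k * d0 := by
    intro k
    induction k with
    | zero => simp [hd0]
    | succ n ih =>
      rw [hrec]
      calc ‖T (z n) - zstar‖ = ‖T (z n) - T zstar‖ := by rw [hfix]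
        _ ≤ ρ * ‖z n - zstar‖ := hlip _ _
        _ ≤ ρ * (ρ ^ n * d0) := by
            exact mul_le_mul_of_nonneg_left ih hρ0
        _ = ρ ^ (n + 1) * d0 := by ring
  intro k
  set w := z (k + 1)
  have hwk : ‖w - zstar‖ ≤ ρ ^ (k + 1) * d0 := hgeo (k + 1)
  have hJw : ‖J w - Jstar‖ ≤ ρ * L_T / (1 - ρ) + L_J * (ρ ^ k * d0) := by
    have := hJ (z k)
    rw [← hrec k] at this
    exact this.trans (by
      have := mul_le_mul_of_nonneg_left (hgeo k) hLJ0
      linarith)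
  have key : (a w + (b w).comp (J w)) - (a zstar + (b zstar).comp Jstar)
      = (a w - a zstar) + ((b w - b zstar).comp Jstar + (b w).comp (J w - Jstar)) := by
    ext x
    simp [ContinuousLinearMap.comp_apply, ContinuousLinearMap.sub_apply,
      ContinuousLinearMap.add_apply, map_sub]
    ring
  rw [key]
  have h1 : ‖a w - a zstar‖ ≤ L_x * (ρ ^ (k + 1) * d0) :=
    (ha w zstar).trans (mul_le_mul_of_nonneg_left hwk hLx0)
  have h2 : ‖(b w - b zstar).comp Jstar‖ ≤ L_z * (ρ ^ (k + 1) * d0) * σ_J := by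
    calc ‖(b w - b zstar).comp Jstar‖ ≤ ‖b w - b zstar‖ * ‖Jstar‖ :=
          ContinuousLinearMap.opNorm_comp_le _ _
      _ ≤ L_z * (ρ ^ (k + 1) * d0) * σ_J := by
          apply mul_le_mul ((hb w zstar).trans (mul_le_mul_of_nonneg_left hwk hLz0))
            hJstar (norm_nonneg _) (by positivity)
  have h3 : ‖(b w).comp (J w - Jstar)‖ ≤ C_z * (ρ * L_T / (1 - ρ) + L_J * (ρ ^ k * d0)) := by
    calc ‖(b w).comp (J w - Jstar)‖ ≤ ‖b w‖ * ‖J w - Jstar‖ :=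
          ContinuousLinearMap.opNorm_comp_le _ _
      _ ≤ C_z * (ρ * L_T / (1 - ρ) + L_J * (ρ ^ k * d0)) := by
          apply mul_le_mul (hbbd w) hJw (norm_nonneg _) hCz0
  have hsum := norm_add_le (a w - a zstar) ((b w - b zstar).comp Jstar + (b w).comp (J w - Jstar))
  have hsum2 := norm_add_le ((b w - b zstar).comp Jstar) ((b w).comp (J w - Jstar))
  have heq : L_x * (ρ ^ (k + 1) * d0) + (L_z * (ρ ^ (k + 1) * d0) * σ_J
      + C_z * (ρ * L_T / (1 - ρ) + L_J * (ρ ^ k * d0)))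
      = ρ * L_T * C_z / (1 - ρ) + ρ ^ k * d0 * (ρ * (L_x + L_z * σ_J) + C_z * L_J) := by
    rw [pow_succ]
    ring
  linarith [h1, h2, h3, hsum, hsum2]
end

section
/- Under the hypotheses of the previous bound, additionally suppose ‖A‖ ≤ σ_A for a linear map A, and that g⋆ = v⋆∘A satisfies ‖g⋆‖ ≥ C_g > 0. Define ε_k = (σ_A/C_g)(ρL_T C_z/(1−ρ) + ρ^k d₀ C₁) with C₁ = ρ(L_x + L_z σ_J) + C_z L_J. If ε_k < 1, then the cosine of the angle between g⋆ and ĝ = v(z_{k+1})∘A satisfies cos(g⋆, ĝ) ≥ (1 − ε_k)/(1 + ε_k) > 0. -/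
open scoped RealInnerProductSpace

private lemma adj_norm {E F : Type*}
    [NormedAddCommGroup E] [InnerProductSpace ℝ E] [CompleteSpace E]
    [NormedAddCommGroup F] [InnerProductSpace ℝ F] [CompleteSpace F]
    (B : E →L[ℝ] F) : ‖ContinuousLinearMap.adjoint B‖ = ‖B‖ :=
  LinearIsometryEquiv.norm_map ContinuousLinearMap.adjoint B

set_option maxHeartbeats 1000000 in
theorem stmt_11 {E X Φ : Type*}
    [NormedAddCommGroup E] [InnerProductSpace ℝ E] [CompleteSpace E]
    [NormedAddCommGroup X] [InnerProductSpace ℝ X] [CompleteSpace X]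
    [NormedAddCommGroup Φ] [InnerProductSpace ℝ Φ] [CompleteSpace Φ]
    (T : E → E) (ρ : ℝ) (hρ0 : 0 ≤ ρ) (hρ1 : ρ < 1)
    (hlip : ∀ x y, ‖T x - T y‖ ≤ ρ * ‖x - y‖)
    (zstar : E) (hfix : T zstar = zstar)
    (z : ℕ → E) (hrec : ∀ k, z (k + 1) = T (z k))
    (d0 : ℝ) (hd0 : d0 = ‖z 0 - zstar‖)
    (a : E → X) (b : E → E) (J : E → X →L[ℝ] E) (Jstar : X →L[ℝ] E)
    (L_x L_z C_z L_T L_J σ_J σ_A C_g : ℝ)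
    (hLx0 : 0 ≤ L_x) (hLz0 : 0 ≤ L_z) (hCz0 : 0 ≤ C_z) (hLT0 : 0 ≤ L_T)
    (hLJ0 : 0 ≤ L_J) (hσJ0 : 0 ≤ σ_J) (hCg0 : 0 < C_g)
    (ha : ∀ w w', ‖a w - a w'‖ ≤ L_x * ‖w - w'‖)
    (hb : ∀ w w', ‖b w - b w'‖ ≤ L_z * ‖w - w'‖)
    (hbbd : ∀ w, ‖b w‖ ≤ C_z)
    (hJ : ∀ w, ‖J (T w) - Jstar‖ ≤ ρ * L_T / (1 - ρ) + L_J * ‖w - zstar‖)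
    (hJstar : ‖Jstar‖ ≤ σ_J)
    (A : Φ →L[ℝ] X) (hA : ‖A‖ ≤ σ_A)
    (v : E → X) (hv : ∀ w, v w = a w + (J w).adjoint (b w))
    (vstar : X) (hvstar : vstar = a zstar + Jstar.adjoint (b zstar))
    (gstar : Φ) (hgstar : gstar = A.adjoint vstar)
    (hCg : C_g ≤ ‖gstar‖)
    (k : ℕ) (ghat : Φ) (hghat : ghat = A.adjoint (v (z (k + 1))))
    (εk : ℝ)
    (hεk : εk = (σ_A / C_g) * (ρ * L_T * C_z / (1 - ρ) +
      ρ ^ k * d0 * (ρ * (L_x + L_z * σ_J) + C_z * L_J)))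
    (hεk1 : εk < 1) :
    ⟪gstar, ghat⟫ / (‖gstar‖ * ‖ghat‖) ≥ (1 - εk) / (1 + εk) ∧ (0 : ℝ) < (1 - εk) / (1 + εk) := by

  have h1ρ : (0:ℝ) < 1 - ρ := by linarith
  have hd0' : 0 ≤ d0 := hd0 ▸ norm_nonneg _
  have hσA0 : 0 ≤ σ_A := le_trans (norm_nonneg A) hA
  -- geometric decay
  have hgeo : ∀ n, ‖z n - zstar‖ ≤ ρ ^ n * d0 := by
    intro n
    induction n with
    | zero => simp [hd0]
    | succ n ih =>
      calc ‖z (n+1) - zstar‖ = ‖T (z n) - T zstar‖ := by rw [hrec, hfix]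
        _ ≤ ρ * ‖z n - zstar‖ := hlip _ _
        _ ≤ ρ * (ρ ^ n * d0) := mul_le_mul_of_nonneg_left ih hρ0
        _ = ρ ^ (n+1) * d0 := by ring
  have hzk : ‖z k - zstar‖ ≤ ρ ^ k * d0 := hgeo k
  have hzk1 : ‖z (k+1) - zstar‖ ≤ ρ * (ρ ^ k * d0) := by
    calc ‖z (k+1) - zstar‖ = ‖T (z k) - T zstar‖ := by rw [hrec, hfix]
      _ ≤ ρ * ‖z k - zstar‖ := hlip _ _
      _ ≤ ρ * (ρ ^ k * d0) := mul_le_mul_of_nonneg_left hzk hρ0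
  set u := z (k+1) with hu
  -- decomposition of v u - vstar
  have hdecomp : v u - vstar = (a u - a zstar) + Jstar.adjoint (b u - b zstar)
      + ((J u) - Jstar).adjoint (b u) := by
    rw [hv, hvstar, map_sub, map_sub]
    simp only [ContinuousLinearMap.sub_apply]
    abel
  have hJu : ‖J u - Jstar‖ ≤ ρ * L_T / (1 - ρ) + L_J * ‖z k - zstar‖ := by
    have := hJ (z k)
    rwa [← hrec k] at this
  have hB : ‖v u - vstar‖ ≤ ρ * L_T * C_z / (1 - ρ) +
      ρ ^ k * d0 * (ρ * (L_x + L_z * σ_J) + C_z * L_J) := by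
    have h1 : ‖a u - a zstar‖ ≤ L_x * ‖u - zstar‖ := ha _ _
    have h2 : ‖Jstar.adjoint (b u - b zstar)‖ ≤ σ_J * (L_z * ‖u - zstar‖) := by
      calc ‖Jstar.adjoint (b u - b zstar)‖ ≤ ‖Jstar.adjoint‖ * ‖b u - b zstar‖ :=
            Jstar.adjoint.le_opNorm _
        _ ≤ σ_J * (L_z * ‖u - zstar‖) := by
            rw [adj_norm]
            exact mul_le_mul hJstar (hb _ _) (norm_nonneg _) hσJ0
    have h3 : ‖((J u) - Jstar).adjoint (b u)‖ ≤
        (ρ * L_T / (1 - ρ) + L_J * ‖z k - zstar‖) * C_z := by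
      calc ‖((J u) - Jstar).adjoint (b u)‖ ≤ ‖((J u) - Jstar).adjoint‖ * ‖b u‖ :=
            ContinuousLinearMap.le_opNorm _ _
        _ ≤ (ρ * L_T / (1 - ρ) + L_J * ‖z k - zstar‖) * C_z := by
            rw [adj_norm]
            refine mul_le_mul hJu (hbbd _) (norm_nonneg _) ?_
            have : 0 ≤ ρ * L_T / (1 - ρ) :=
              div_nonneg (mul_nonneg hρ0 hLT0) h1ρ.le
            have : 0 ≤ L_J * ‖z k - zstar‖ := mul_nonneg hLJ0 (norm_nonneg _)
            linarith
    have htri : ‖v u - vstar‖ ≤ ‖a u - a zstar‖ + ‖Jstar.adjoint (b u - b zstar)‖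
        + ‖((J u) - Jstar).adjoint (b u)‖ := by
      rw [hdecomp]
      exact le_trans (norm_add_le _ _) (by gcongr; exact norm_add_le _ _)
    have e1 : L_x * ‖u - zstar‖ ≤ L_x * (ρ * (ρ ^ k * d0)) :=
      mul_le_mul_of_nonneg_left hzk1 hLx0
    have e2 : σ_J * (L_z * ‖u - zstar‖) ≤ σ_J * (L_z * (ρ * (ρ ^ k * d0))) := by
      exact mul_le_mul_of_nonneg_left (mul_le_mul_of_nonneg_left hzk1 hLz0) hσJ0
    have e3 : L_J * ‖z k - zstar‖ * C_z ≤ L_J * (ρ ^ k * d0) * C_z :=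
      mul_le_mul_of_nonneg_right (mul_le_mul_of_nonneg_left hzk hLJ0) hCz0
    have h3' : (ρ * L_T / (1 - ρ) + L_J * ‖z k - zstar‖) * C_z
        = ρ * L_T / (1 - ρ) * C_z + L_J * ‖z k - zstar‖ * C_z := by ring
    rw [h3'] at h3
    have heq : ρ * L_T * C_z / (1 - ρ) + ρ ^ k * d0 * (ρ * (L_x + L_z * σ_J) + C_z * L_J)
        = L_x * (ρ * (ρ ^ k * d0)) + σ_J * (L_z * (ρ * (ρ ^ k * d0)))
          + (ρ * L_T / (1 - ρ) * C_z + L_J * (ρ ^ k * d0) * C_z) := by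
      field_simp [h1ρ.ne']
      ring
    rw [heq]
    linarith
  -- bound on gradient perturbation
  have hεk0 : 0 ≤ εk := by
    rw [hεk]
    have h1 : 0 ≤ ρ * L_T * C_z / (1 - ρ) :=
      div_nonneg (mul_nonneg (mul_nonneg hρ0 hLT0) hCz0) h1ρ.le
    have h2 : 0 ≤ ρ ^ k * d0 * (ρ * (L_x + L_z * σ_J) + C_z * L_J) := by
      have : 0 ≤ ρ * (L_x + L_z * σ_J) + C_z * L_J := by positivity
      positivity
    positivity
  have hg : (0:ℝ) < ‖gstar‖ := lt_of_lt_of_le hCg0 hCg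
  have hδ : ‖ghat - gstar‖ ≤ εk * ‖gstar‖ := by
    have h1 : ghat - gstar = A.adjoint (v u - vstar) := by
      rw [hghat, hgstar, ← map_sub]
    have h2 : ‖ghat - gstar‖ ≤ σ_A * ‖v u - vstar‖ := by
      rw [h1]
      calc ‖A.adjoint (v u - vstar)‖ ≤ ‖A.adjoint‖ * ‖v u - vstar‖ :=
            ContinuousLinearMap.le_opNorm _ _
        _ ≤ σ_A * ‖v u - vstar‖ := by
            rw [adj_norm]
            exact mul_le_mul_of_nonneg_right hA (norm_nonneg _)
    have h3 : σ_A * ‖v u - vstar‖ ≤ εk * C_g := by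
      have key : εk * C_g = σ_A * (ρ * L_T * C_z / (1 - ρ) +
          ρ ^ k * d0 * (ρ * (L_x + L_z * σ_J) + C_z * L_J)) := by
        rw [hεk]; field_simp [hCg0.ne']
      rw [key]
      exact mul_le_mul_of_nonneg_left hB hσA0
    have h4 : εk * C_g ≤ εk * ‖gstar‖ := mul_le_mul_of_nonneg_left hCg hεk0
    linarith
  -- cosine bound
  have hinner : (1 - εk) * ‖gstar‖ ^ 2 ≤ ⟪gstar, ghat⟫ := by
    have h1 : ⟪gstar, ghat⟫ = ‖gstar‖ ^ 2 + ⟪gstar, ghat - gstar⟫ := by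
      rw [inner_sub_right, real_inner_self_eq_norm_sq]; ring
    have h2 : |⟪gstar, ghat - gstar⟫| ≤ ‖gstar‖ * ‖ghat - gstar‖ :=
      abs_real_inner_le_norm _ _
    have h3 := abs_le.mp h2
    nlinarith [mul_le_mul_of_nonneg_left hδ hg.le]
  have hnhi : ‖ghat‖ ≤ (1 + εk) * ‖gstar‖ := by
    have := norm_sub_norm_le ghat gstar
    nlinarith
  have hnlo : (1 - εk) * ‖gstar‖ ≤ ‖ghat‖ := by
    have h1 := norm_sub_norm_le gstar ghat
    rw [norm_sub_rev] at h1
    nlinarith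
  have h1ε : (0:ℝ) < 1 - εk := by linarith
  have h1ε' : (0:ℝ) < 1 + εk := by linarith
  have hh : (0:ℝ) < ‖ghat‖ := lt_of_lt_of_le (mul_pos h1ε hg) hnlo
  constructor
  · rw [ge_iff_le, div_le_div_iff₀ h1ε' (mul_pos hg hh)]
    nlinarith [mul_le_mul_of_nonneg_left hnhi (mul_pos h1ε hg).le]
  · exact div_pos h1ε h1ε'
end
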